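/- Let T : [1,∞) → ℝ be a nondecreasing, positive, convex, continuous function with T(1) > 1 and liminf_{r→∞} (log T(r))/r = 0, and let c > 0 be a fixed real number. Then there exist a set E ⊂ [1,∞) of zero lower density and a function ε with ε(r) → 0 as r → ∞ such that T(r) ≤ T(r+c) ≤ (1+ε(r))·T(r) for all sufficiently large r ∈ [1,∞)∖E. -/

import Mathlib

open Filter MeasureTheory Topology
open scoped Classical

noncomputable section

namespace TropNev

/-- `f` is tropical meromorphic: continuous and piecewise linear
(affine on a small interval on each side of every point). -/
def IsTropMero (f : ℝ → ℝ) : Prop :=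
  Continuous f ∧ ∀ x : ℝ, ∃ ε > (0:ℝ), ∃ sR sL : ℝ,
    (∀ t ∈ Set.Icc x (x + ε), f t = f x + sR * (t - x)) ∧
    (∀ t ∈ Set.Icc (x - ε) x, f t = f x + sL * (t - x))

/-- ω_f(x): right derivative minus left derivative. -/
def omega (f : ℝ → ℝ) (x : ℝ) : ℝ :=
  derivWithin f (Set.Ici x) x - derivWithin f (Set.Iic x) x

/-- tropical entire: tropical meromorphic with no poles. -/
def IsTropEntire (f : ℝ → ℝ) : Prop :=
  IsTropMero f ∧ ∀ x : ℝ, 0 ≤ omega f x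

/-- tropical proximity function m(r,f). -/
def prox (f : ℝ → ℝ) (r : ℝ) : ℝ := (max (f r) 0 + max (f (-r)) 0) / 2

/-- tropical counting function of poles N(r,f). -/
def countN (f : ℝ → ℝ) (r : ℝ) : ℝ :=
  (1 / 2) * ∑' b : ℝ, if |b| < r ∧ omega f b < 0 then -omega f b * (r - |b|) else 0

/-- N(r, 1₀ ⊘ g): counting function of the roots of g. -/
def countNroots (g : ℝ → ℝ) (r : ℝ) : ℝ := countN (fun x => -g x) r

/-- tropical Nevanlinna characteristic T(r,f). -/
def charT (f : ℝ → ℝ) (r : ℝ) : ℝ := prox f r + countN f r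

/-- limsup_{r→∞} h(r) = 0 (in the real-analysis sense). -/
def LimsupZero (h : ℝ → ℝ) : Prop :=
  (∀ ε : ℝ, 0 < ε → ∀ᶠ r : ℝ in atTop, h r < ε) ∧
  (∀ ε : ℝ, 0 < ε → ∃ᶠ r : ℝ in atTop, -ε < h r)

/-- liminf_{r→∞} h(r) = 0 (in the real-analysis sense). -/
def LiminfZero (h : ℝ → ℝ) : Prop :=
  (∀ ε : ℝ, 0 < ε → ∃ᶠ r : ℝ in atTop, h r < ε) ∧
  (∀ ε : ℝ, 0 < ε → ∀ᶠ r : ℝ in atTop, -ε < h r)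

/-- E ⊆ [1,∞) has zero upper density. -/
def ZeroUpperDensity (E : Set ℝ) : Prop :=
  LimsupZero fun r => (volume (E ∩ Set.Icc 1 r)).toReal / r

/-- E ⊆ [1,∞) has zero lower density. -/
def ZeroLowerDensity (E : Set ℝ) : Prop :=
  LiminfZero fun r => (volume (E ∩ Set.Icc 1 r)).toReal / r

/-- max of finitely many reals. -/
def tmax {m : ℕ} (F : Fin (m + 1) → ℝ) : ℝ :=
  Finset.univ.sup' Finset.univ_nonempty F

/-- tropical holomorphic curve with reduced representation f₀,…,f_n :
all components tropical entire, with no common roots. -/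
def IsTropCurve {n : ℕ} (f : Fin (n + 1) → ℝ → ℝ) : Prop :=
  (∀ k, IsTropEntire (f k)) ∧ ∀ x : ℝ, ∃ k, ¬ 0 < omega (f k) x

/-- tropical Cartan characteristic T_f(r). -/
def curveT {n : ℕ} (f : Fin (n + 1) → ℝ → ℝ) (r : ℝ) : ℝ :=
  (tmax (fun k => f k r) + tmax (fun k => f k (-r))) / 2 - tmax fun k => f k 0

/-- homogeneous tropical polynomial of degree d in the variables x₀,…,x_n,
with coefficients in ℝ ∪ {−∞} indexed by the degree-d monomials
(i.e. multisets of size d over the variables), not all −∞. -/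
structure TropPoly (n d : ℕ) where
  coeff : Sym (Fin (n + 1)) d → EReal
  nontriv : ∃ s, coeff s ≠ ⊥

/-- value of the monomial term c_I + i₀x₀+⋯+i_nx_n. -/
def TropPoly.term {n d : ℕ} (P : TropPoly n d) (s : Sym (Fin (n + 1)) d)
    (x : Fin (n + 1) → ℝ) : EReal :=
  P.coeff s + (((Multiset.map x (s : Multiset (Fin (n + 1)))).sum : ℝ) : EReal)

def TropPoly.evalE {n d : ℕ} (P : TropPoly n d) (x : Fin (n + 1) → ℝ) : EReal :=
  Finset.univ.sup fun s => P.term s x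

/-- the tropical hypersurface V_P : points where the maximum is attained
by at least two monomials. -/
def TropPoly.hyp {n d : ℕ} (P : TropPoly n d) : Set (Fin (n + 1) → ℝ) :=
  {x | ∃ s t : Sym (Fin (n + 1)) d, s ≠ t ∧
        P.term s x = P.evalE x ∧ P.term t x = P.evalE x}

/-- the composition P ∘ f. -/
def TropPoly.compo {n d : ℕ} (P : TropPoly n d) (f : Fin (n + 1) → ℝ → ℝ) : ℝ → ℝ :=
  fun t => (P.evalE fun k => f k t).toReal

/-- ‖a‖ = max_I c_I for the coefficient vector of P. -/
def TropPoly.coeffNorm {n d : ℕ} (P : TropPoly n d) : ℝ :=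
  (Finset.univ.sup fun s => P.coeff s).toReal

/-- tropical Weil function λ_{V_P}(f(x)) = d‖f(x)‖ + d‖a‖ − (P∘f)(x). -/
def weil {n d : ℕ} (P : TropPoly n d) (f : Fin (n + 1) → ℝ → ℝ) (x : ℝ) : ℝ :=
  d * tmax (fun k => f k x) + d * P.coeffNorm - P.compo f x

/-- proximity function m_f(r, V_P). -/
def proxCurve {n d : ℕ} (f : Fin (n + 1) → ℝ → ℝ) (P : TropPoly n d) (r : ℝ) : ℝ :=
  (weil P f r + weil P f (-r)) / 2

/-- f is tropical algebraically nondegenerate. -/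
def AlgNondeg {n : ℕ} (f : Fin (n + 1) → ℝ → ℝ) : Prop :=
  ∀ d : ℕ, 1 ≤ d → ∀ P : TropPoly n d, ∃ t : ℝ, (fun k => f k t) ∉ P.hyp

/-- f is tropical linearly nondegenerate. -/
def LinNondeg {n : ℕ} (f : Fin (n + 1) → ℝ → ℝ) : Prop :=
  ∀ P : TropPoly n 1, ∃ t : ℝ, (fun k => f k t) ∉ P.hyp

/-- Gondran–Minoux linear independence of a finite family of real functions. -/
def GMLinIndep {ι : Type*} [Fintype ι] [DecidableEq ι] (g : ι → ℝ → ℝ) : Prop :=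
  ¬ ∃ (I J : Finset ι) (a : ι → EReal),
      I.Nonempty ∧ J.Nonempty ∧ Disjoint I J ∧ I ∪ J = Finset.univ ∧
      (∃ i, a i ≠ ⊥) ∧
      ∀ x : ℝ, (I.sup fun i => a i + ((g i x : ℝ) : EReal)) =
        (J.sup fun j => a j + ((g j x : ℝ) : EReal))

/-- the degree-d tropical monomials f^I in f₀,…,f_n. -/
def monos {n : ℕ} (f : Fin (n + 1) → ℝ → ℝ) (d : ℕ) :
    Sym (Fin (n + 1)) d → ℝ → ℝ :=
  fun s x => (Multiset.map (fun k => f k x) (s : Multiset (Fin (n + 1)))).sum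

/-- Gondran–Minoux algebraic independence. -/
def GMAlgIndep {n : ℕ} (f : Fin (n + 1) → ℝ → ℝ) : Prop :=
  ∀ d : ℕ, 1 ≤ d → GMLinIndep (monos f d)

/-- F is a complete tropical linear combination of the family h :
every tropical-linear representation of F over h has all coefficients finite. -/
def TropComplete {ι : Type*} [Fintype ι] (h : ι → ℝ → ℝ) (F : ℝ → ℝ) : Prop :=
  ∀ a : ι → EReal,
    (∀ x : ℝ, ((F x : ℝ) : EReal) = Finset.univ.sup fun k => a k + ((h k x : ℝ) : EReal)) →
    ∀ k, a k ≠ ⊥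

/-- the tropical Casoratian with shift c. -/
def casorati {m : ℕ} (c : ℝ) (g : Fin (m + 1) → ℝ → ℝ) : ℝ → ℝ := fun x =>
  Finset.univ.sup' Finset.univ_nonempty
    fun π : Equiv.Perm (Fin (m + 1)) => ∑ j, g j (x + ((π j : ℕ) : ℝ) * c)

/-- tropical Cartan characteristic for a reduced representation [f₀:f₁] in TP¹. -/
def charT2 (f0 f1 : ℝ → ℝ) (r : ℝ) : ℝ :=
  (max (f0 r) (f1 r) + max (f0 (-r)) (f1 (-r))) / 2 - max (f0 0) (f1 0)

/-- reduced representation in TP¹: f₀, f₁ tropical entire with no common roots. -/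
def ReducedPair (f0 f1 : ℝ → ℝ) : Prop :=
  IsTropEntire f0 ∧ IsTropEntire f1 ∧ ∀ x : ℝ, ¬ (0 < omega f0 x ∧ 0 < omega f1 x)

/-- (P∘f)(x) = max(a₀+f₀(x), a₁+f₁(x)) for a TP¹ value [a₁:a₀]. -/
def pcomp (a0 a1 : EReal) (f0 f1 : ℝ → ℝ) : ℝ → ℝ := fun x =>
  ((a0 + ((f0 x : ℝ) : EReal)) ⊔ (a1 + ((f1 x : ℝ) : EReal))).toReal

/-- defect of a tropical holomorphic curve with respect to a tropical hypersurface. -/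
def curveDefect {n d : ℕ} (f : Fin (n + 1) → ℝ → ℝ) (P : TropPoly n d) : ℝ :=
  1 - Filter.limsup (fun r => countNroots (P.compo f) r / (d * curveT f r)) atTop

end TropNev

end

open TropNev Filter MeasureTheory Topology
/-- lemma on convex growth functions (liminf version, fixed shift c). -/
theorem stmt1 (T : ℝ → ℝ)
    (hmono : MonotoneOn T (Set.Ici 1))
    (hpos : ∀ r : ℝ, 1 ≤ r → 0 < T r)
    (hconv : ConvexOn ℝ (Set.Ici 1) T)
    (hcont : ContinuousOn T (Set.Ici 1))
    (hT1 : 1 < T 1)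
    (hliminf : LiminfZero fun r => Real.log (T r) / r)
    (c : ℝ) (hc : 0 < c) :
    ∃ (E : Set ℝ) (ε : ℝ → ℝ), E ⊆ Set.Ici 1 ∧ ZeroLowerDensity E ∧
      Filter.Tendsto ε Filter.atTop (nhds 0) ∧
      ∃ r₀ : ℝ, ∀ r : ℝ, r₀ ≤ r → r ∉ E →
        T r ≤ T (r + c) ∧ T (r + c) ≤ (1 + ε r) * T r := by
  classical
  set L : ℝ → ℝ := fun r => Real.log (T (max r 1)) with hLdef
  set h : ℝ → ℝ := fun r => L (r + c) - L r with hhdef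
  have hTpos : ∀ r : ℝ, 0 < T (max r 1) := fun r => hpos _ (le_max_right _ _)
  have hLmono : Monotone L := by
    intro x y hxy
    exact Real.log_le_log (hTpos x)
      (hmono (Set.mem_Ici.mpr (le_max_right _ _)) (Set.mem_Ici.mpr (le_max_right _ _)) (max_le_max hxy le_rfl))
  have hLpos : ∀ r : ℝ, 0 < L r := by
    intro r
    exact Real.log_pos (lt_of_lt_of_le hT1
      (hmono (le_refl (1:ℝ) : (1:ℝ) ∈ Set.Ici 1) (Set.mem_Ici.mpr (le_max_right _ _)) (le_max_right _ _)))
  have hLcont : Continuous L := by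
    have h1 : Continuous fun r : ℝ => T (max r 1) :=
      hcont.comp_continuous (continuous_id.max continuous_const) fun r => le_max_right r 1
    exact h1.log fun r => (hTpos r).ne'
  have hhcont : Continuous h := (hLcont.comp (continuous_id.add continuous_const)).sub hLcont
  have hhnonneg : ∀ r : ℝ, 0 ≤ h r := fun r => sub_nonneg.mpr (hLmono (by linarith))
  -- choose the sequence Q
  have key : ∀ n : ℕ, ∀ b : ℝ, ∃ r : ℝ, b ≤ r ∧ Real.log (T r) / r < 1 / ((n:ℝ) + 1) ^ 2 := by
    intro n b
    have h1 := hliminf.1 (1 / ((n:ℝ) + 1) ^ 2) (by positivity)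
    rw [frequently_atTop] at h1
    obtain ⟨r, hr1, hr2⟩ := h1 b
    exact ⟨r, hr1, hr2⟩
  choose F hF1 hF2 using key
  set Q : ℕ → ℝ := fun n => Nat.rec (F 0 (2 * c + 2))
    (fun n q => F (n + 1) (max (q + 1) ((n:ℝ) + 2 * c + 3))) n with hQdef
  have hQ0 : Q 0 = F 0 (2 * c + 2) := rfl
  have hQs : ∀ n : ℕ, Q (n + 1) = F (n + 1) (max (Q n + 1) ((n:ℝ) + 2 * c + 3)) := fun n => rfl
  have hQlb : ∀ n : ℕ, (n:ℝ) + 2 * c + 2 ≤ Q n := by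
    intro n
    cases n with
    | zero => simpa [hQ0] using hF1 0 (2 * c + 2)
    | succ m =>
        have h1 := hF1 (m + 1) (max (Q m + 1) ((m:ℝ) + 2 * c + 3))
        rw [← hQs m] at h1
        have h2 : (m:ℝ) + 2 * c + 3 ≤ max (Q m + 1) ((m:ℝ) + 2 * c + 3) := le_max_right _ _
        push_cast
        linarith
  have hQsucc : ∀ n : ℕ, Q n + 1 ≤ Q (n + 1) := by
    intro n
    have h1 := hF1 (n + 1) (max (Q n + 1) ((n:ℝ) + 2 * c + 3))
    rw [← hQs n] at h1
    exact le_trans (le_max_left _ _) h1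
  have hQpos : ∀ n : ℕ, 0 < Q n := fun n => lt_of_lt_of_le (by positivity) (hQlb n)
  have hQlog : ∀ n : ℕ, Real.log (T (Q n)) < Q n * (1 / ((n:ℝ) + 1) ^ 2) := by
    intro n
    have h2 : Real.log (T (Q n)) / Q n < 1 / ((n:ℝ) + 1) ^ 2 := by
      cases n with
      | zero => exact hF2 0 (2 * c + 2)
      | succ m => rw [hQs m]; exact hF2 (m + 1) _
    calc Real.log (T (Q n)) = Real.log (T (Q n)) / Q n * Q n :=
          (div_mul_cancel₀ _ (hQpos n).ne').symm
      _ < 1 / ((n:ℝ) + 1) ^ 2 * Q n := by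
          exact mul_lt_mul_of_pos_right h2 (hQpos n)
      _ = Q n * (1 / ((n:ℝ) + 1) ^ 2) := mul_comm _ _
  set R : ℕ → ℝ := fun n => Q n - c with hRdef
  have hRlb : ∀ n : ℕ, (n:ℝ) + c + 2 ≤ R n := by
    intro n; have := hQlb n; simp only [hRdef]; linarith
  have hR1 : ∀ n : ℕ, (1:ℝ) ≤ R n := fun n => by
    have h1 := hRlb n; have h2 : (0:ℝ) ≤ (n:ℝ) := Nat.cast_nonneg n; linarith
  have hRmono : StrictMono R := by
    apply strictMono_nat_of_lt_succ
    intro n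
    have := hQsucc n
    simp only [hRdef]; linarith
  have hRc : ∀ n : ℕ, c ≤ R n := fun n => by
    have h1 := hRlb n; have h2 : (0:ℝ) ≤ (n:ℝ) := Nat.cast_nonneg n; linarith
  have hRQ : ∀ n : ℕ, R n + c = Q n := fun n => by simp [hRdef]
  -- the exceptional set
  set E : Set ℝ :=
    ⋃ n : ℕ, {r : ℝ | R n ≤ r ∧ r < R (n + 1) ∧ 1 / ((n:ℝ) + 1) < h r} with hEdef
  have hEsub : E ⊆ Set.Ici 1 := by
    intro r hr
    obtain ⟨n, hn⟩ := Set.mem_iUnion.mp hr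
    exact le_trans (hR1 n) hn.1
  -- locating r in the grid
  have harch : ∀ r : ℝ, R 0 ≤ r → ∃ n : ℕ, R n ≤ r ∧ r < R (n + 1) := by
    intro r hr
    have hex : ∃ n : ℕ, r < R n := by
      obtain ⟨m, hm⟩ := exists_nat_gt r
      refine ⟨m, lt_of_lt_of_le hm ?_⟩
      have := hRlb m; linarith
    have hne : Nat.find hex ≠ 0 := by
      intro h0
      have := Nat.find_spec hex
      rw [h0] at this
      linarith
    obtain ⟨n, hn⟩ := Nat.exists_eq_succ_of_ne_zero hne
    refine ⟨n, ?_, ?_⟩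
    · have hlt : n < Nat.find hex := by rw [hn]; exact Nat.lt_succ_self n
      have := Nat.find_min hex hlt
      linarith [not_lt.mp this]
    · have := Nat.find_spec hex
      rwa [hn] at this
  have hsmall : ∀ (N : ℕ) (r : ℝ), R N ≤ r → r ∉ E → h r ≤ 1 / ((N:ℝ) + 1) := by
    intro N r hNr hrE
    obtain ⟨n, hn1, hn2⟩ := harch r (le_trans (hRmono.monotone (Nat.zero_le N)) hNr)
    have hNn : N ≤ n := by
      by_contra hcon
      push_neg at hcon
      have : R (n + 1) ≤ R N := hRmono.monotone (show n + 1 ≤ N by omega)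
      linarith
    have hhr : ¬ (1 / ((n:ℝ) + 1) < h r) := by
      intro hlt
      exact hrE (Set.mem_iUnion.mpr ⟨n, hn1, hn2, hlt⟩)
    have : 1 / ((n:ℝ) + 1) ≤ 1 / ((N:ℝ) + 1) := by
      apply one_div_le_one_div_of_le (by positivity)
      have := (Nat.cast_le (α := ℝ)).mpr hNn; linarith
    linarith [not_lt.mp hhr]
  -- integral estimate
  have iL : ∀ a b : ℝ, IntervalIntegrable L volume a b := fun a b =>
    hLcont.intervalIntegrable a b
  have hIntEst : ∀ N : ℕ, (∫ x in (1:ℝ)..(R N), h x) ≤ c * Real.log (T (Q N)) := by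
    intro N
    have hab : (1:ℝ) ≤ R N := hR1 N
    have iLc : IntervalIntegrable (fun x => L (x + c)) volume 1 (R N) :=
      (hLcont.comp (continuous_id.add continuous_const)).intervalIntegrable 1 (R N)
    have h1 : (∫ x in (1:ℝ)..(R N), h x)
        = (∫ x in (1:ℝ)..(R N), L (x + c)) - ∫ x in (1:ℝ)..(R N), L x := by
      simp only [hhdef]
      exact intervalIntegral.integral_sub iLc (iL 1 (R N))
    have h2 : (∫ x in (1:ℝ)..(R N), L (x + c)) = ∫ x in (1+c)..(R N + c), L x :=
      intervalIntegral.integral_comp_add_right L c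
    have h3 : (∫ x in (1:ℝ)..(1+c), L x) + ∫ x in (1+c)..(R N + c), L x
        = ∫ x in (1:ℝ)..(R N + c), L x :=
      intervalIntegral.integral_add_adjacent_intervals (iL _ _) (iL _ _)
    have h4 : (∫ x in (1:ℝ)..(R N), L x) + ∫ x in (R N)..(R N + c), L x
        = ∫ x in (1:ℝ)..(R N + c), L x :=
      intervalIntegral.integral_add_adjacent_intervals (iL _ _) (iL _ _)
    have h5 : 0 ≤ ∫ x in (1:ℝ)..(1+c), L x :=
      intervalIntegral.integral_nonneg (by linarith) (fun x _ => (hLpos x).le)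
    have h6 : (∫ x in (R N)..(R N + c), L x) ≤ c * L (R N + c) := by
      have h6' := intervalIntegral.integral_mono_on (f := L) (g := fun _ => L (R N + c))
        (μ := volume) (a := R N) (b := R N + c) (by linarith) (iL _ _)
        intervalIntegrable_const (fun x hx => hLmono hx.2)
      rw [intervalIntegral.integral_const, smul_eq_mul] at h6'
      have he : R N + c - R N = c := by ring
      rwa [he] at h6'
    have h7 : L (R N + c) = Real.log (T (Q N)) := by
      rw [hRQ N]
      simp only [hLdef]
      rw [max_eq_left (by have := hQlb N; have : (0:ℝ) ≤ (N:ℝ) := Nat.cast_nonneg N; linarith : (1:ℝ) ≤ Q N)]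
    rw [h7] at h6
    rw [h1, h2]
    linarith
  -- volume estimate
  have hvol : ∀ N : ℕ, 1 ≤ N →
      (volume (E ∩ Set.Icc 1 (R N))).toReal ≤ 2 * c * R N / ((N:ℝ) + 1) := by
    intro N hN1
    have hNpos : (0:ℝ) < (N:ℝ) := by exact_mod_cast hN1
    have hRNpos : (0:ℝ) < R N := lt_of_lt_of_le one_pos (hR1 N)
    set A : Set ℝ := {x : ℝ | 1 / (N:ℝ) ≤ h x} ∩ Set.Ioc 1 (R N) with hAdef
    have hmeas : MeasurableSet {x : ℝ | 1 / (N:ℝ) ≤ h x} :=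
      (isClosed_le continuous_const hhcont).measurableSet
    have hint : Integrable h (volume.restrict (Set.Ioc 1 (R N))) :=
      hhcont.integrableOn_Ioc
    have hmark := mul_meas_ge_le_integral_of_nonneg
      (μ := volume.restrict (Set.Ioc 1 (R N))) (f := h)
      (Filter.Eventually.of_forall hhnonneg) hint (1 / (N:ℝ))
    rw [measureReal_def, Measure.restrict_apply hmeas] at hmark
    have hieq : (∫ x, h x ∂(volume.restrict (Set.Ioc 1 (R N))))
        = ∫ x in (1:ℝ)..(R N), h x :=
      (intervalIntegral.integral_of_le (hR1 N)).symm
    rw [hieq] at hmark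
    -- A has finite volume
    have hAne : volume A ≠ ⊤ := by
      have : volume A ≤ volume (Set.Ioc 1 (R N)) :=
        measure_mono Set.inter_subset_right
      rw [Real.volume_Ioc] at this
      exact ne_top_of_le_ne_top ENNReal.ofReal_ne_top this
    -- containment
    have hsub2 : E ∩ Set.Icc 1 (R N) ⊆ A ∪ {R N} := by
      rintro r ⟨hrE, hr1, hr2⟩
      obtain ⟨n, hn1, hn2, hn3⟩ := Set.mem_iUnion.mp hrE
      by_cases hcase : n + 1 ≤ N
      · left
        constructor
        · have hd : 1 / (N:ℝ) ≤ 1 / ((n:ℝ) + 1) := by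
            apply one_div_le_one_div_of_le (by positivity)
            exact_mod_cast hcase
          exact le_of_lt (lt_of_le_of_lt hd hn3)
        · refine ⟨?_, hr2⟩
          have := hRlb n
          have hn0 : (0:ℝ) ≤ (n:ℝ) := Nat.cast_nonneg n
          linarith
      · right
        have hNn : R N ≤ R n := hRmono.monotone (by omega)
        have : r = R N := le_antisymm hr2 (le_trans hNn hn1)
        simp [this]
    have hmle : volume (E ∩ Set.Icc 1 (R N)) ≤ volume A := by
      calc volume (E ∩ Set.Icc 1 (R N)) ≤ volume (A ∪ {R N}) := measure_mono hsub2
        _ ≤ volume A + volume {R N} := measure_union_le _ _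
        _ = volume A := by simp
    have htr : (volume (E ∩ Set.Icc 1 (R N))).toReal ≤ (volume A).toReal :=
      ENNReal.toReal_mono hAne hmle
    -- Markov rearranged
    have hvolA : (volume A).toReal ≤ (N:ℝ) * ∫ x in (1:ℝ)..(R N), h x := by
      have h8 := mul_le_mul_of_nonneg_left hmark hNpos.le
      have h9 : (N:ℝ) * (1 / (N:ℝ) * (volume A).toReal) = (volume A).toReal := by
        field_simp
      rw [h9] at h8
      exact h8
    have hQle : Q N ≤ 2 * R N := by
      have := hRc N
      rw [← hRQ N]; linarith
    have hlogle : Real.log (T (Q N)) ≤ Q N * (1 / ((N:ℝ)+1)^2) := (hQlog N).le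
    calc (volume (E ∩ Set.Icc 1 (R N))).toReal
        ≤ (N:ℝ) * ∫ x in (1:ℝ)..(R N), h x := le_trans htr hvolA
      _ ≤ (N:ℝ) * (c * Real.log (T (Q N))) :=
          mul_le_mul_of_nonneg_left (hIntEst N) hNpos.le
      _ ≤ (N:ℝ) * (c * (Q N * (1 / ((N:ℝ)+1)^2))) := by
          apply mul_le_mul_of_nonneg_left _ hNpos.le
          exact mul_le_mul_of_nonneg_left hlogle hc.le
      _ ≤ (N:ℝ) * (c * (2 * R N * (1 / ((N:ℝ)+1)^2))) := by
          apply mul_le_mul_of_nonneg_left _ hNpos.le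
          apply mul_le_mul_of_nonneg_left _ hc.le
          apply mul_le_mul_of_nonneg_right hQle (by positivity)
      _ = (2 * c * R N) * ((N:ℝ) / ((N:ℝ)+1)^2) := by ring
      _ ≤ (2 * c * R N) * (1 / ((N:ℝ)+1)) := by
          apply mul_le_mul_of_nonneg_left _ (by positivity)
          rw [div_le_div_iff₀ (by positivity) (by positivity)]
          nlinarith
      _ = 2 * c * R N / ((N:ℝ)+1) := by ring
  -- the error function
  set eps : ℝ → ℝ := fun r => if r ∈ E then 0 else Real.exp (h r) - 1 with hepsdef
  have hexp1 : ∀ r : ℝ, 1 ≤ Real.exp (h r) := by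
    intro r
    rw [show (1:ℝ) = Real.exp 0 from (Real.exp_zero).symm]
    exact Real.exp_le_exp.mpr (hhnonneg r)
  have hepsnonneg : ∀ r : ℝ, 0 ≤ eps r := by
    intro r
    simp only [hepsdef]
    split
    · exact le_rfl
    · have := hexp1 r; linarith
  refine ⟨E, eps, hEsub, ⟨?_, ?_⟩, ?_, R 0, ?_⟩
  · -- frequently small density ratio
    intro ε hε
    rw [frequently_atTop]
    intro b
    obtain ⟨N, hN⟩ := exists_nat_gt (max b (2 * c / ε))
    have hcε : 0 < 2 * c / ε := by positivity
    have hNb : b < (N:ℝ) := lt_of_le_of_lt (le_max_left _ _) hN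
    have hNcε : 2 * c / ε < (N:ℝ) := lt_of_le_of_lt (le_max_right _ _) hN
    have hN1 : 1 ≤ N := by
      have h0 : (0:ℝ) < (N:ℝ) := lt_trans hcε hNcε
      have : 0 < N := by exact_mod_cast h0
      omega
    have hRNpos : (0:ℝ) < R N := lt_of_lt_of_le one_pos (hR1 N)
    refine ⟨R N, ?_, ?_⟩
    · have := hRlb N
      linarith
    · have hv := hvol N hN1
      calc (volume (E ∩ Set.Icc 1 (R N))).toReal / R N
          ≤ (2 * c * R N / ((N:ℝ) + 1)) / R N := by gcongr
        _ = 2 * c / ((N:ℝ) + 1) := by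
            field_simp
        _ < ε := by
            rw [div_lt_iff₀ (by positivity)]
            rw [div_lt_iff₀ hε] at hNcε
            nlinarith
  · -- eventually ratio > -ε
    intro ε hε
    filter_upwards [eventually_ge_atTop (1:ℝ)] with r hr
    have h0 : 0 ≤ (volume (E ∩ Set.Icc 1 r)).toReal / r :=
      div_nonneg ENNReal.toReal_nonneg (by linarith)
    exact lt_of_lt_of_le (by linarith : -ε < (0:ℝ)) h0
  · -- eps tends to 0
    rw [Metric.tendsto_atTop]
    intro δ hδ
    have hA : 0 < Real.log (1 + δ) := Real.log_pos (by linarith)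
    obtain ⟨N, hN⟩ := exists_nat_gt (1 / Real.log (1 + δ))
    refine ⟨R N, ?_⟩
    intro r hr
    rw [Real.dist_eq, sub_zero, abs_of_nonneg (hepsnonneg r)]
    by_cases hrE : r ∈ E
    · simp only [hepsdef, if_pos hrE]
      exact hδ
    · simp only [hepsdef, if_neg hrE]
      have hsm := hsmall N r hr hrE
      have hlt : 1 / ((N:ℝ) + 1) < Real.log (1 + δ) := by
        rw [div_lt_iff₀ hA] at hN
        rw [div_lt_iff₀ (by positivity)]
        nlinarith
      have : Real.exp (h r) < 1 + δ := by
        calc Real.exp (h r) ≤ Real.exp (1 / ((N:ℝ) + 1)) := Real.exp_le_exp.mpr hsm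
          _ < Real.exp (Real.log (1 + δ)) := Real.exp_lt_exp.mpr hlt
          _ = 1 + δ := Real.exp_log (by linarith)
      linarith
  · -- the main inequality
    intro r hr hrE
    have hr1 : (1:ℝ) ≤ r := le_trans (hR1 0) hr
    have hrc1 : (1:ℝ) ≤ r + c := by linarith
    constructor
    · exact hmono hr1 hrc1 (by linarith)
    · have hmax1 : max r 1 = r := max_eq_left hr1
      have hmax2 : max (r + c) 1 = r + c := max_eq_left hrc1
      have hhr : h r = Real.log (T (r + c)) - Real.log (T r) := by
        simp only [hhdef, hLdef, hmax1, hmax2]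
      have heq : Real.exp (h r) = T (r + c) / T r := by
        rw [hhr, Real.exp_sub, Real.exp_log (hpos _ hrc1), Real.exp_log (hpos _ hr1)]
      have heps : eps r = Real.exp (h r) - 1 := by simp only [hepsdef, if_neg hrE]
      have : (1 + eps r) * T r = T (r + c) := by
        rw [heps]
        have : (1 + (Real.exp (h r) - 1)) = Real.exp (h r) := by ring
        rw [this, heq, div_mul_cancel₀ _ (hpos _ hr1).ne']
      linarith
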